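/- Let t: G∘G ⟹ G∘G satisfy the QYBE and t² = id, and define t⁽ⁿ⁾ inductively as before. Then (t⁽ⁿ⁺¹⁾)² = G(t⁽ⁿ⁾) ∘ (t⁽ⁿ⁾)_G for all n ≥ 1. -/

import Mathlib

open CategoryTheory

variable {A : Type*} [Category A]

/-- `gpow G n M` is the `n`-th power `Gⁿ M` of the endofunctor `G` applied to `M`. -/
def gpow (Gf : A ⥤ A) : ℕ → A → A
  | 0, M => M
  | n+1, M => gpow Gf n (Gf.obj M)

/-- `gmap G n f = Gⁿ(f)`. -/
def gmap (Gf : A ⥤ A) : (n : ℕ) → {X Y : A} → (X ⟶ Y) → (gpow Gf n X ⟶ gpow Gf n Y)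
  | 0, _, _, f => f
  | n+1, _, _, f => gmap Gf n (Gf.map f)

lemma gpow_succ_out (Gf : A ⥤ A) : ∀ (n : ℕ) (M : A), gpow Gf (n+1) M = Gf.obj (gpow Gf n M)
  | 0, _ => rfl
  | n+1, M => gpow_succ_out Gf n (Gf.obj M)

lemma gpow_add (Gf : A ⥤ A) : ∀ (a b : ℕ) (M : A), gpow Gf a (gpow Gf b M) = gpow Gf (a + b) M
  | a, 0, M => rfl
  | a, b+1, M => by
      rw [Nat.add_succ]
      exact gpow_add Gf a b (Gf.obj M)

lemma gpow_add' (Gf : A ⥤ A) (a b c : ℕ) (h : a + b = c) (M : A) :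
    gpow Gf a (gpow Gf b M) = gpow Gf c M := by subst h; exact gpow_add Gf a b M

/-- `tpow G t n` is the component family of `t⁽ⁿ⁺¹⁾`, where `t⁽¹⁾ = t` and
`t⁽ⁿ⁺¹⁾ = (t⁽ⁿ⁾)_G ∘ Gⁿ(t)`. -/
def tpow (Gf : A ⥤ A) (t : Gf ⋙ Gf ⟶ Gf ⋙ Gf) :
    (n : ℕ) → (M : A) → (gpow Gf (n+2) M ⟶ gpow Gf (n+2) M)
  | 0, M => t.app M
  | n+1, M => gmap Gf (n+1) (t.app M) ≫ tpow Gf t n (Gf.obj M)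


lemma gmap_comp (Gf : A ⥤ A) : ∀ (n : ℕ) {X Y Z : A} (f : X ⟶ Y) (g : Y ⟶ Z),
    gmap Gf n (f ≫ g) = gmap Gf n f ≫ gmap Gf n g
  | 0, _, _, _, _, _ => rfl
  | n+1, _, _, _, f, g => by
      show gmap Gf n (Gf.map (f ≫ g)) = _
      rw [Gf.map_comp]
      exact gmap_comp Gf n _ _

lemma gmap_succ (Gf : A ⥤ A) : ∀ (n : ℕ) {X Y : A} (f : X ⟶ Y),
    gmap Gf (n+1) f = eqToHom (gpow_succ_out Gf n X) ≫ Gf.map (gmap Gf n f) ≫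
      eqToHom (gpow_succ_out Gf n Y).symm
  | 0, _, _, f => by simp only [gmap]; exact (by simp : Gf.map f = 𝟙 _ ≫ Gf.map f ≫ 𝟙 _)
  | n+1, _, _, f => gmap_succ Gf n (Gf.map f)

lemma tpow_natural (Gf : A ⥤ A) (t : Gf ⋙ Gf ⟶ Gf ⋙ Gf) :
    ∀ (n : ℕ) (X : A) (g : X ⟶ X),
    gmap Gf (n+2) g ≫ tpow Gf t n X = tpow Gf t n X ≫ gmap Gf (n+2) g
  | 0, X, g => t.naturality g
  | n+1, X, g => by
      show gmap Gf (n+1) ((Gf ⋙ Gf).map g) ≫ gmap Gf (n+1) (t.app X) ≫ tpow Gf t n (Gf.obj X) = _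
      erw [← Category.assoc, ← gmap_comp, t.naturality g, gmap_comp, Category.assoc]
      show gmap Gf (n+1) (t.app X) ≫ gmap Gf (n+2) (Gf.map g) ≫ tpow Gf t n (Gf.obj X) = _
      erw [tpow_natural Gf t n (Gf.obj X) (Gf.map g)]
      exact (Category.assoc _ _ _).symm

/-- if `t` satisfies the QYBE and `t² = id`, then
`(t⁽ⁿ⁺¹⁾)² = G(t⁽ⁿ⁾) ∘ (t⁽ⁿ⁾)_G` for all `n ≥ 1`
(stated with `tpow Gf t k = t⁽ᵏ⁺¹⁾`). -/
theorem tpow_sq (Gf : A ⥤ A) (t : Gf ⋙ Gf ⟶ Gf ⋙ Gf)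
    (hqybe : ∀ M : A, Gf.map (t.app M) ≫ t.app (Gf.obj M) ≫ Gf.map (t.app M) =
      t.app (Gf.obj M) ≫ Gf.map (t.app M) ≫ t.app (Gf.obj M))
    (hsq : ∀ M : A, t.app M ≫ t.app M = 𝟙 ((Gf ⋙ Gf).obj M))
    (n : ℕ) (M : A) :
    tpow Gf t (n + 1) M ≫ tpow Gf t (n + 1) M =
      tpow Gf t n (Gf.obj M) ≫
        eqToHom (show gpow Gf (n+3) M = Gf.obj (gpow Gf (n+2) M) from
          gpow_succ_out Gf (n+2) M) ≫
        Gf.map (tpow Gf t n M) ≫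
        eqToHom (show Gf.obj (gpow Gf (n+2) M) = gpow Gf (n+3) M from
          (gpow_succ_out Gf (n+2) M).symm) := by
  induction n generalizing M with
  | zero =>
      show (Gf.map (t.app M) ≫ t.app (Gf.obj M)) ≫ (Gf.map (t.app M) ≫ t.app (Gf.obj M)) =
        t.app (Gf.obj M) ≫ 𝟙 _ ≫ Gf.map (t.app M) ≫ 𝟙 _
      simp only [Category.id_comp, Category.comp_id, Category.assoc]
      slice_lhs 1 3 => rw [hqybe M]
      slice_lhs 3 4 => rw [hsq (Gf.obj M)]
      simp
  | succ n ih =>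
      show (gmap Gf (n+2) (t.app M) ≫ gmap Gf (n+1) (t.app (Gf.obj M)) ≫
            tpow Gf t n (Gf.obj (Gf.obj M))) ≫
          gmap Gf (n+2) (t.app M) ≫ gmap Gf (n+1) (t.app (Gf.obj M)) ≫
            tpow Gf t n (Gf.obj (Gf.obj M)) =
        (gmap Gf (n+1) (t.app (Gf.obj M)) ≫ tpow Gf t n (Gf.obj (Gf.obj M))) ≫
          eqToHom (gpow_succ_out Gf (n+2) (Gf.obj M)) ≫
          Gf.map (gmap Gf (n+1) (t.app M) ≫ tpow Gf t n (Gf.obj M)) ≫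
          eqToHom (gpow_succ_out Gf (n+2) (Gf.obj M)).symm
      have hcomm : gmap Gf (n+2) (t.app M) ≫ tpow Gf t n (Gf.obj (Gf.obj M)) =
          tpow Gf t n (Gf.obj (Gf.obj M)) ≫ gmap Gf (n+2) (t.app M) :=
        tpow_natural Gf t n (Gf.obj (Gf.obj M)) (t.app M)
      have hbraid : gmap Gf (n+2) (t.app M) ≫ gmap Gf (n+1) (t.app (Gf.obj M)) ≫
            gmap Gf (n+2) (t.app M) =
          gmap Gf (n+1) (t.app (Gf.obj M)) ≫ gmap Gf (n+2) (t.app M) ≫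
            gmap Gf (n+1) (t.app (Gf.obj M)) := by
        have h := congrArg (gmap Gf (n+1)) (hqybe M)
        rw [gmap_comp, gmap_comp, gmap_comp, gmap_comp] at h
        exact h
      have hsucc : gmap Gf (n+2) (t.app M) =
          eqToHom (gpow_succ_out Gf (n+2) (Gf.obj M)) ≫ Gf.map (gmap Gf (n+1) (t.app M)) ≫
            eqToHom (gpow_succ_out Gf (n+2) (Gf.obj M)).symm :=
        gmap_succ Gf (n+1) (t.app M)
      have h2 : (gmap Gf (n+1) (t.app (Gf.obj M)) ≫ tpow Gf t n (Gf.obj (Gf.obj M))) ≫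
            gmap Gf (n+1) (t.app (Gf.obj M)) ≫ tpow Gf t n (Gf.obj (Gf.obj M)) =
          tpow Gf t n (Gf.obj (Gf.obj M)) ≫ eqToHom (gpow_succ_out Gf (n+2) (Gf.obj M)) ≫
            Gf.map (tpow Gf t n (Gf.obj M)) ≫
            eqToHom (gpow_succ_out Gf (n+2) (Gf.obj M)).symm := ih (Gf.obj M)
      erw [Category.assoc] at h2
      erw [Gf.map_comp]
      simp only [Category.assoc]
      erw [Category.assoc (gmap Gf (n+1) (t.app (Gf.obj M))), Category.assoc (gmap Gf (n+1) (t.app (Gf.obj M)))]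
      have hbraid' : ∀ {Z : A} (h : _ ⟶ Z), gmap Gf (n+2) (t.app M) ≫ gmap Gf (n+1) (t.app (Gf.obj M)) ≫
          gmap Gf (n+2) (t.app M) ≫ h = gmap Gf (n+1) (t.app (Gf.obj M)) ≫ gmap Gf (n+2) (t.app M) ≫
          gmap Gf (n+1) (t.app (Gf.obj M)) ≫ h := by
        intro Z h
        have := eq_whisker hbraid h
        erw [Category.assoc, Category.assoc, Category.assoc, Category.assoc] at this
        exact this
      erw [← reassoc_of% hcomm, hbraid', h2, reassoc_of% hcomm, hsucc]
      erw [Category.assoc, Category.assoc, eqToHom_trans_assoc, eqToHom_refl, Category.id_comp]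
      rfl
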